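/- Let A be an m×n real matrix, Ṽ ∈ ℝ^{n×r} and Ũ ∈ ℝ^{m×(r+ℓ)} orthonormal with orthogonal completions Q₁ = [Ũ, Ũ⊥] and Q₂ = [Ṽ, Ṽ⊥], and set Ā = Q₁*AQ₂ with blocks Ā₁₁ ((r+ℓ)×r), Ā₁₂, Ā₂₁, Ā₂₂. Assume rank(Ā₁₁) = r. Then Q₁*(A − AṼ(Ũ*AṼ)†Ũ*A)Q₂ = [[0, Ā₁₂ − Ā₁₁Ā₁₁†Ā₁₂],[0, Ā₂₂ − Ā₂₁Ā₁₁†Ā₁₂]]; that is, up to the orthogonal transformations Q₁, Q₂, the generalized Nyström approximation error is zero in the first block column, equals the residual of the orthogonal projection of Ā₁₂ onto the column space of Ā₁₁ in the (1,2) block, and equals the generalized Schur complement Ā₂₂ − Ā₂₁Ā₁₁†Ā₁₂ in the (2,2) block. -/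

import Mathlib

open Matrix

theorem Matrix.isHermitian_transpose_mul_self {m n : Type*} [Fintype m] (A : Matrix m n ℝ) :
    (Aᵀ * A).IsHermitian := by
  rw [IsHermitian, conjTranspose_eq_transpose_of_trivial, transpose_mul, transpose_transpose]

/-- The tuple `f` sorted in nonincreasing order. -/
noncomputable def sortedDesc {α : Type*} [Fintype α] (f : α → ℝ) :
    Fin (Fintype.card α) → ℝ := fun i =>
  let g : Fin (Fintype.card α) → ℝ := f ∘ (Fintype.equivFin α).symm
  g (Tuple.sort g i.rev)

/-- Singular values of a real matrix, in nonincreasing order (generic index types). -/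
noncomputable def sVals {m n : Type*} [Fintype m] [Fintype n] [DecidableEq n]
    (M : Matrix m n ℝ) : Fin (Fintype.card n) → ℝ :=
  sortedDesc fun j => Real.sqrt ((Matrix.isHermitian_transpose_mul_self M).eigenvalues j)

/-- Singular values of a real `Fin m × Fin n` matrix, in nonincreasing order,
`singularValues M 0` being the largest. -/
noncomputable def singularValues {m n : ℕ} (M : Matrix (Fin m) (Fin n) ℝ) :
    Fin n → ℝ := fun i =>
  let g : Fin n → ℝ := fun j =>
    Real.sqrt ((Matrix.isHermitian_transpose_mul_self M).eigenvalues j)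
  g (Tuple.sort g i.rev)

/-- The spectral (operator 2-)norm of a real matrix. -/
noncomputable def specNorm {m n : Type*} [Fintype m] [Fintype n] [DecidableEq n]
    (M : Matrix m n ℝ) : ℝ :=
  ‖LinearMap.toContinuousLinearMap (Matrix.toEuclideanLin M)‖

/-- The Moore-Penrose pseudoinverse of a real matrix, defined via the Tikhonov
regularization limit of `(AᵀA + εI)⁻¹Aᵀ` as `ε` tends to `0` from above. -/
noncomputable def pinv {m n : Type*} [Fintype m] [Fintype n] [DecidableEq n]
    (A : Matrix m n ℝ) : Matrix n m ℝ :=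
  Filter.limUnder (nhdsWithin 0 (Set.Ioi 0)) fun ε : ℝ => (Aᵀ * A + ε • 1)⁻¹ * Aᵀ

lemma pinv_of_isUnit {m n : Type*} [Fintype m] [Fintype n] [DecidableEq n]
    (A : Matrix m n ℝ) (h : IsUnit (Aᵀ * A)) : pinv A = (Aᵀ * A)⁻¹ * Aᵀ := by
  have hdet : IsUnit (Aᵀ * A).det := (isUnit_iff_isUnit_det _).mp h
  have hc : ContinuousAt (fun ε : ℝ => (Aᵀ * A + ε • 1)⁻¹ * Aᵀ) 0 := by
    have h1 : Continuous (fun ε : ℝ => Aᵀ * A + ε • 1) := by continuity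
    have h2 : ContinuousAt Inv.inv (Aᵀ * A + (0:ℝ) • 1) := by
      apply continuousAt_matrix_inv
      simp only [zero_smul, add_zero]
      exact (NormedRing.inverse_continuousAt hdet.unit)
    have h3 : ContinuousAt (fun ε : ℝ => (Aᵀ * A + ε • 1)⁻¹) 0 :=
      ContinuousAt.comp h2 h1.continuousAt
    have h4 : Continuous (fun M : Matrix n n ℝ => M * Aᵀ) :=
      Continuous.matrix_mul continuous_id continuous_const
    exact h4.continuousAt.comp h3
  have ht : Filter.Tendsto (fun ε : ℝ => (Aᵀ * A + ε • 1)⁻¹ * Aᵀ)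
      (nhdsWithin 0 (Set.Ioi 0)) (nhds ((Aᵀ * A)⁻¹ * Aᵀ)) := by
    have := hc.continuousWithinAt (s := Set.Ioi 0)
    simpa [ContinuousWithinAt, zero_smul, add_zero] using this
  exact ht.limUnder_eq

lemma pinv_mul_self_of_isUnit {m n : Type*} [Fintype m] [Fintype n] [DecidableEq n]
    (A : Matrix m n ℝ) (h : IsUnit (Aᵀ * A)) : pinv A * A = 1 := by
  rw [pinv_of_isUnit A h, Matrix.mul_assoc,
    Matrix.nonsing_inv_mul _ ((isUnit_iff_isUnit_det _).mp h)]

lemma isUnit_transpose_mul_self_of_rank {m n : Type*} [Fintype m] [Fintype n] [DecidableEq n]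
    (A : Matrix m n ℝ) (h : A.rank = Fintype.card n) : IsUnit (Aᵀ * A) := by
  rw [← Matrix.mulVec_surjective_iff_isUnit]
  have hr : (Aᵀ * A).rank = Fintype.card n := by rw [Matrix.rank_transpose_mul_self]; exact h
  have : LinearMap.range (Aᵀ * A).mulVecLin = ⊤ := by
    apply Submodule.eq_top_of_finrank_eq
    simpa [Matrix.rank] using hr
  intro v
  exact (LinearMap.range_eq_top.mp this) v

/-- **Equation (3.4)**: up to the orthogonal transformations `Q₁, Q₂`, the error of
the generalized Nyström approximation is zero in the first block column, equals the
residual `Ā₁₂ − Ā₁₁Ā₁₁†Ā₁₂` in the `(1,2)` block, and equals the generalized Schur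
complement `Ā₂₂ − Ā₂₁Ā₁₁†Ā₁₂` in the `(2,2)` block. -/
theorem generalized_nystrom_error_structure
    (m n r ℓ : ℕ) (hrn : r ≤ n) (hrlm : r + ℓ ≤ m)
    (A : Matrix (Fin m) (Fin n) ℝ)
    (tV : Matrix (Fin n) (Fin r) ℝ) (tU : Matrix (Fin m) (Fin (r + ℓ)) ℝ)
    (tVperp : Matrix (Fin n) (Fin (n - r)) ℝ)
    (tUperp : Matrix (Fin m) (Fin (m - (r + ℓ))) ℝ)
    (hV : tVᵀ * tV = 1) (hU : tUᵀ * tU = 1)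
    (Q₁ : Matrix (Fin m) (Fin (r + ℓ) ⊕ Fin (m - (r + ℓ))) ℝ)
    (Q₂ : Matrix (Fin n) (Fin r ⊕ Fin (n - r)) ℝ)
    (hQ₁ : Q₁ = Matrix.fromCols tU tUperp)
    (hQ₂ : Q₂ = Matrix.fromCols tV tVperp)
    (hQ₁o : Q₁ᵀ * Q₁ = 1) (hQ₁o' : Q₁ * Q₁ᵀ = 1)
    (hQ₂o : Q₂ᵀ * Q₂ = 1) (hQ₂o' : Q₂ * Q₂ᵀ = 1)
    (Abar : Matrix (Fin (r + ℓ) ⊕ Fin (m - (r + ℓ))) (Fin r ⊕ Fin (n - r)) ℝ)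
    (hAbar : Abar = Q₁ᵀ * A * Q₂)
    (A₁₁ : Matrix (Fin (r + ℓ)) (Fin r) ℝ) (hA₁₁ : A₁₁ = Abar.toBlocks₁₁)
    (A₁₂ : Matrix (Fin (r + ℓ)) (Fin (n - r)) ℝ) (hA₁₂ : A₁₂ = Abar.toBlocks₁₂)
    (A₂₁ : Matrix (Fin (m - (r + ℓ))) (Fin r) ℝ) (hA₂₁ : A₂₁ = Abar.toBlocks₂₁)
    (A₂₂ : Matrix (Fin (m - (r + ℓ))) (Fin (n - r)) ℝ) (hA₂₂ : A₂₂ = Abar.toBlocks₂₂)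
    (hrank : A₁₁.rank = r) :
    Q₁ᵀ * (A - A * tV * pinv (tUᵀ * A * tV) * (tUᵀ * A)) * Q₂ =
      Matrix.fromBlocks 0 (A₁₂ - A₁₁ * pinv A₁₁ * A₁₂)
                        0 (A₂₂ - A₂₁ * pinv A₁₁ * A₁₂) := by
  have hP : pinv A₁₁ * A₁₁ = 1 :=
    pinv_mul_self_of_isUnit A₁₁
      (isUnit_transpose_mul_self_of_rank A₁₁ (by simpa using hrank))
  have hblocks : Abar = fromBlocks (tUᵀ * A * tV) (tUᵀ * A * tVperp)
      (tUperpᵀ * A * tV) (tUperpᵀ * A * tVperp) := by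
    rw [hAbar, hQ₁, hQ₂, transpose_fromCols, fromRows_mul, fromRows_mul_fromCols]
  have e11 : tUᵀ * A * tV = A₁₁ := by rw [hA₁₁, hblocks, toBlocks_fromBlocks₁₁]
  have e12 : tUᵀ * A * tVperp = A₁₂ := by rw [hA₁₂, hblocks, toBlocks_fromBlocks₁₂]
  have e21 : tUperpᵀ * A * tV = A₂₁ := by rw [hA₂₁, hblocks, toBlocks_fromBlocks₂₁]
  have e22 : tUperpᵀ * A * tVperp = A₂₂ := by rw [hA₂₂, hblocks, toBlocks_fromBlocks₂₂]
  have hL : Q₁ᵀ * A * tV = fromRows A₁₁ A₂₁ := by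
    rw [hQ₁, transpose_fromCols, fromRows_mul, fromRows_mul, e11, e21]
  have hR : tUᵀ * A * Q₂ = fromCols A₁₁ A₁₂ := by
    rw [hQ₂, mul_fromCols, e11, e12]
  have hAbarB : Q₁ᵀ * A * Q₂ = fromBlocks A₁₁ A₁₂ A₂₁ A₂₂ := by
    rw [← hAbar, hblocks, e11, e12, e21, e22]
  have h1 : A₁₁ * pinv A₁₁ * A₁₁ = A₁₁ := by rw [Matrix.mul_assoc, hP, Matrix.mul_one]
  have h2 : A₂₁ * pinv A₁₁ * A₁₁ = A₂₁ := by rw [Matrix.mul_assoc, hP, Matrix.mul_one]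
  have key : Q₁ᵀ * (A * tV * pinv A₁₁ * (tUᵀ * A)) * Q₂ =
      fromBlocks (A₁₁ * pinv A₁₁ * A₁₁) (A₁₁ * pinv A₁₁ * A₁₂)
                 (A₂₁ * pinv A₁₁ * A₁₁) (A₂₁ * pinv A₁₁ * A₁₂) := by
    have hassoc : Q₁ᵀ * (A * tV * pinv A₁₁ * (tUᵀ * A)) * Q₂ =
        Q₁ᵀ * A * tV * pinv A₁₁ * (tUᵀ * A * Q₂) := by
      simp only [Matrix.mul_assoc]
    rw [hassoc, hL, hR, fromRows_mul, fromRows_mul_fromCols]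
  rw [e11, Matrix.mul_sub, Matrix.sub_mul, key, hAbarB, h1, h2,
    sub_eq_add_neg, fromBlocks_neg, fromBlocks_add]
  simp [sub_eq_add_neg]
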